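/- Let B be a complete ccc Boolean algebra and U an ultrafilter on B. Then U is a coherent selective ultrafilter if and only if for every pair of partitions P, Q of B with P ⪯ Q, either U ∩ Q ≠ ∅, or there is a set X ⊆ P such that ⨆X ∈ U and for every q ∈ Q the set {p ∈ X : p ⊓ q ≠ ⊥} has at most one element. -/

import Mathlib

open Cardinal Filter

variable {B : Type*}

/-- A partition of a Boolean algebra: a set of nonzero, pairwise disjoint
elements that is maximal (every nonzero element meets some member). -/
def IsBPartition [BooleanAlgebra B] (P : Set B) : Prop :=
  ⊥ ∉ P ∧ (P.Pairwise fun a b => a ⊓ b = ⊥) ∧ ∀ b : B, b ≠ ⊥ → ∃ p ∈ P, b ⊓ p ≠ ⊥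

/-- `P` refines `Q`: every member of `P` lies below some member of `Q`. -/
def BRefines [BooleanAlgebra B] (P Q : Set B) : Prop :=
  ∀ p ∈ P, ∃ q ∈ Q, p ≤ q

/-- A filter on a Boolean algebra. -/
def IsBFilter [BooleanAlgebra B] (F : Set B) : Prop :=
  ⊥ ∉ F ∧ ⊤ ∈ F ∧ (∀ a ∈ F, ∀ b : B, a ≤ b → b ∈ F) ∧ ∀ a ∈ F, ∀ b ∈ F, a ⊓ b ∈ F

/-- An ultrafilter on a Boolean algebra. -/
def IsBUltrafilter [BooleanAlgebra B] (U : Set B) : Prop :=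
  IsBFilter U ∧ ∀ b : B, b ∈ U ∨ bᶜ ∈ U

/-- The countable chain condition: every set of pairwise disjoint
nonzero elements is countable. -/
def BCCC (B : Type*) [BooleanAlgebra B] : Prop :=
  ∀ S : Set B, ⊥ ∉ S → (S.Pairwise fun a b => a ⊓ b = ⊥) → S.Countable

/-- A filter on ℕ, presented as a family of subsets of ℕ. -/
def IsNFilter (V : Set (Set ℕ)) : Prop :=
  ∅ ∉ V ∧ Set.univ ∈ V ∧ (∀ A ∈ V, ∀ C : Set ℕ, A ⊆ C → C ∈ V) ∧
    ∀ A ∈ V, ∀ C ∈ V, A ∩ C ∈ V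

/-- An ultrafilter on ℕ, presented as a family of subsets of ℕ. -/
def IsNUltrafilter (V : Set (Set ℕ)) : Prop :=
  IsNFilter V ∧ ∀ A : Set ℕ, A ∈ V ∨ Aᶜ ∈ V

/-- A P-point on ℕ: an ultrafilter such that for every partition of ℕ into
sets not in the ultrafilter there is a member meeting each piece finitely. -/
def IsPPointFamily (V : Set (Set ℕ)) : Prop :=
  IsNUltrafilter V ∧ ∀ A : ℕ → Set ℕ, (Pairwise fun m n => A m ∩ A n = ∅) →
    (⋃ n, A n) = Set.univ → (∀ n, A n ∉ V) → ∃ S ∈ V, ∀ n, (S ∩ A n).Finite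

/-- A selective ultrafilter on ℕ: for every partition of ℕ into sets not in
the ultrafilter there is a member meeting each piece in at most one point. -/
def IsSelectiveFamily (V : Set (Set ℕ)) : Prop :=
  IsNUltrafilter V ∧ ∀ A : ℕ → Set ℕ, (Pairwise fun m n => A m ∩ A n = ∅) →
    (⋃ n, A n) = Set.univ → (∀ n, A n ∉ V) → ∃ S ∈ V, ∀ n, (S ∩ A n).Subsingleton

/-- A coherent P-ultrafilter: an ultrafilter whose trace on every countably
infinite partition is a P-point on ℕ. -/
def IsCoherentPUltrafilter [CompleteBooleanAlgebra B] (U : Set B) : Prop :=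
  IsBUltrafilter U ∧ ∀ p : ℕ → B, Function.Injective p → IsBPartition (Set.range p) →
    IsPPointFamily {A : Set ℕ | (⨆ n ∈ A, p n) ∈ U}

/-- A coherent selective ultrafilter: an ultrafilter whose trace on every
countably infinite partition is a selective ultrafilter on ℕ. -/
def IsCoherentSelectiveUltrafilter [CompleteBooleanAlgebra B] (U : Set B) : Prop :=
  IsBUltrafilter U ∧ ∀ p : ℕ → B, Function.Injective p → IsBPartition (Set.range p) →
    IsSelectiveFamily {A : Set ℕ | (⨆ n ∈ A, p n) ∈ U}

/-- Atomless: every nonzero element properly contains a nonzero element. -/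
def BAtomless (B : Type*) [BooleanAlgebra B] : Prop :=
  ∀ b : B, b ≠ ⊥ → ∃ c : B, c ≠ ⊥ ∧ c < b
lemma ultra_sup [BooleanAlgebra B] {U : Set B} (hU : IsBUltrafilter U) {a b : B}
    (h : a ⊔ b ∈ U) : a ∈ U ∨ b ∈ U := by
  by_contra hc
  push_neg at hc
  rcases hU.2 a with h1 | h1
  · exact hc.1 h1
  rcases hU.2 b with h2 | h2
  · exact hc.2 h2
  have h3 : aᶜ ⊓ bᶜ ∈ U := hU.1.2.2.2 _ h1 _ h2
  have h4 := hU.1.2.2.2 _ h _ h3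
  rw [← compl_sup, inf_compl_eq_bot] at h4
  exact hU.1.1 h4

lemma finite_sSup_mem [CompleteBooleanAlgebra B] {U : Set B} (hU : IsBUltrafilter U)
    {F : Set B} (hF : F.Finite) (h : sSup F ∈ U) : ∃ p ∈ F, p ∈ U := by
  refine Set.Finite.induction_on (motive := fun F _ => sSup F ∈ U → ∃ p ∈ F, p ∈ U) F hF ?_ ?_ h
  · intro h
    rw [sSup_empty] at h
    exact absurd h hU.1.1
  · intro a s _ _ ih h
    rw [sSup_insert] at h
    rcases ultra_sup hU h with h | h
    · exact ⟨a, Set.mem_insert _ _, h⟩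
    · obtain ⟨p, hp, hpU⟩ := ih h
      exact ⟨p, Set.mem_insert_of_mem _ hp, hpU⟩

lemma partition_sSup_top [CompleteBooleanAlgebra B] {P : Set B} (hP : IsBPartition P) :
    sSup P = ⊤ := by
  rw [← compl_eq_bot]
  by_contra hne
  obtain ⟨p, hpP, hmeet⟩ := hP.2.2 _ hne
  exact hmeet (le_bot_iff.1 (le_trans (inf_le_inf_left _ (le_sSup hpP))
    (le_of_eq (compl_inf_eq_bot))))

lemma partition_pdisj [BooleanAlgebra B] {p : ℕ → B} (hinj : Function.Injective p)
    (hP : IsBPartition (Set.range p)) : ∀ m n : ℕ, m ≠ n → p m ⊓ p n = ⊥ :=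
  fun m n h => hP.2.1 (Set.mem_range_self m) (Set.mem_range_self n) (fun he => h (hinj he))

lemma trace_inf [CompleteBooleanAlgebra B] {p : ℕ → B}
    (hdisj : ∀ m n : ℕ, m ≠ n → p m ⊓ p n = ⊥) (A C : Set ℕ) :
    (⨆ n ∈ A, p n) ⊓ (⨆ n ∈ C, p n) = ⨆ n ∈ A ∩ C, p n := by
  apply le_antisymm
  · simp only [iSup_inf_eq, inf_iSup_eq]
    refine iSup₂_le fun n hn => iSup₂_le fun m hm => ?_
    rcases eq_or_ne m n with rfl | h
    · exact le_trans inf_le_left (le_biSup _ ⟨hm, hn⟩)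
    · rw [hdisj m n h]
      exact bot_le
  · exact iSup₂_le fun n hn => le_inf (le_biSup _ hn.1) (le_biSup _ hn.2)

lemma trace_top [CompleteBooleanAlgebra B] {p : ℕ → B}
    (hP : IsBPartition (Set.range p)) : (⨆ n, p n) = ⊤ := by
  have := partition_sSup_top hP
  rwa [sSup_range] at this

lemma trace_compl [CompleteBooleanAlgebra B] {p : ℕ → B} (hinj : Function.Injective p)
    (hP : IsBPartition (Set.range p)) (A : Set ℕ) :
    (⨆ n ∈ Aᶜ, p n) = (⨆ n ∈ A, p n)ᶜ := by
  have h1 : (⨆ n ∈ A, p n) ⊓ (⨆ n ∈ Aᶜ, p n) = ⊥ := by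
    rw [trace_inf (partition_pdisj hinj hP), Set.inter_compl_self]
    simp
  have h2 : (⨆ n ∈ A, p n) ⊔ (⨆ n ∈ Aᶜ, p n) = ⊤ := by
    rw [← trace_top hP]
    apply le_antisymm (sup_le (iSup₂_le fun n _ => le_iSup p n) (iSup₂_le fun n _ => le_iSup p n))
    refine iSup_le fun n => ?_
    by_cases hn : n ∈ A
    · exact le_sup_of_le_left (le_biSup _ hn)
    · exact le_sup_of_le_right (le_biSup _ hn)
  exact ((isCompl_iff.2 ⟨disjoint_iff.2 h1, codisjoint_iff.2 h2⟩).compl_eq).symm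

lemma trace_ultra [CompleteBooleanAlgebra B] {U : Set B} (hU : IsBUltrafilter U)
    {p : ℕ → B} (hinj : Function.Injective p) (hP : IsBPartition (Set.range p)) :
    IsNUltrafilter {A : Set ℕ | (⨆ n ∈ A, p n) ∈ U} := by
  refine ⟨⟨?_, ?_, ?_, ?_⟩, ?_⟩
  · intro h
    simp only [Set.mem_setOf_eq, Set.mem_empty_iff_false, iSup_false, iSup_bot] at h
    exact hU.1.1 h
  · simp only [Set.mem_setOf_eq, Set.mem_univ, iSup_true]
    rw [trace_top hP]
    exact hU.1.2.1
  · intro A hA C hAC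
    exact hU.1.2.2.1 _ hA _ (iSup₂_le fun n hn => le_biSup _ (hAC hn))
  · intro A hA C hC
    show (⨆ n ∈ A ∩ C, p n) ∈ U
    rw [← trace_inf (partition_pdisj hinj hP)]
    exact hU.1.2.2.2 _ hA _ hC
  · intro A
    rcases hU.2 (⨆ n ∈ A, p n) with h | h
    · exact Or.inl h
    · right
      show (⨆ n ∈ Aᶜ, p n) ∈ U
      rw [trace_compl hinj hP]
      exact h

/-- Characterization of coherent selective ultrafilters via pairs of
partitions. -/
theorem coherentSelective_iff_partition_pairs [CompleteBooleanAlgebra B]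
    (hcc : BCCC B) (U : Set B) (hU : IsBUltrafilter U) :
    IsCoherentSelectiveUltrafilter U ↔
      ∀ P Q : Set B, IsBPartition P → IsBPartition Q → BRefines P Q →
        (Q ∩ U).Nonempty ∨
        ∃ X ⊆ P, sSup X ∈ U ∧ ∀ q ∈ Q, {p ∈ X | p ⊓ q ≠ ⊥}.Subsingleton := by
  classical
  constructor
  · intro hcs P Q hP hQ hPQ
    by_cases hQU : (Q ∩ U).Nonempty
    · exact Or.inl hQU
    right
    by_cases hPU : (P ∩ U).Nonempty
    · obtain ⟨p0, hp0P, hp0U⟩ := hPU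
      refine ⟨{p0}, Set.singleton_subset_iff.2 hp0P, by simpa using hp0U, fun q hq => ?_⟩
      intro x hx y hy
      rw [Set.mem_singleton_iff.1 hx.1, Set.mem_singleton_iff.1 hy.1]
    have hQempty : ∀ q ∈ Q, q ∉ U := fun q hq hqU => hQU ⟨q, hq, hqU⟩
    have hPinf : P.Infinite := by
      intro hf
      obtain ⟨p, hp, hpU⟩ := finite_sSup_mem hU hf
        (by rw [partition_sSup_top hP]; exact hU.1.2.1)
      exact hPU ⟨p, hp, hpU⟩
    have hcount := hcc P hP.1 hP.2.1
    haveI := hcount.to_subtype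
    haveI := hPinf.to_subtype
    obtain ⟨d⟩ := nonempty_denumerable ↥P
    let f : ℕ ≃ ↥P := (Denumerable.eqv ↥P).symm
    let e : ℕ → B := fun n => (f n : B)
    have einj : Function.Injective e := fun a b h => f.injective (Subtype.ext h)
    have erange : Set.range e = P := by
      ext x
      constructor
      · rintro ⟨n, rfl⟩
        exact (f n).2
      · intro hx
        exact ⟨f.symm ⟨x, hx⟩, by simp [e]⟩
    have hrangePart : IsBPartition (Set.range e) := by rwa [erange]
    have hsel := hcs.2 e einj hrangePart
    choose Qof hQ1 hQ2 using fun n => hPQ (e n) (erange ▸ Set.mem_range_self n)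
    set A : ℕ → Set ℕ := fun n => {m | Qof m = Qof n ∧ ∀ k < n, Qof k ≠ Qof n} with hA
    have hdisjA : Pairwise fun m n => A m ∩ A n = ∅ := by
      intro n n' hne
      rw [Set.eq_empty_iff_forall_notMem]
      rintro m ⟨⟨h1, h2⟩, ⟨h1', h2'⟩⟩
      rcases lt_trichotomy n n' with h | h | h
      · exact h2' n h (h1 ▸ h1')
      · exact hne h
      · exact h2 n' h (h1' ▸ h1)
    have hcover : (⋃ n, A n) = Set.univ := by
      rw [Set.eq_univ_iff_forall]
      intro m
      have hex : ∃ k, Qof k = Qof m := ⟨m, rfl⟩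
      have hn : Qof (Nat.find hex) = Qof m := Nat.find_spec hex
      exact Set.mem_iUnion.2 ⟨Nat.find hex,
        hn.symm, fun k hk hkeq => Nat.find_min hex hk (hkeq.trans hn)⟩
    have hnot : ∀ n, A n ∉ {T : Set ℕ | (⨆ m ∈ T, e m) ∈ U} := by
      intro n hn
      have hle : (⨆ m ∈ A n, e m) ≤ Qof n := iSup₂_le fun m hm => hm.1 ▸ hQ2 m
      exact hQempty (Qof n) (hQ1 n) (hU.1.2.2.1 _ hn _ hle)
    obtain ⟨S, hS, hsub⟩ := hsel.2 A hdisjA hcover hnot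
    refine ⟨e '' S, ?_, ?_, ?_⟩
    · exact erange ▸ Set.image_subset_range e S
    · rw [sSup_image]
      exact hS
    · intro q hq x hx y hy
      obtain ⟨m, hmS, rfl⟩ := hx.1
      obtain ⟨m', hm'S, rfl⟩ := hy.1
      have key : ∀ {k : ℕ}, e k ⊓ q ≠ ⊥ → Qof k = q := by
        intro k hk
        by_contra hne
        have hd : Qof k ⊓ q = ⊥ := hQ.2.1 (hQ1 k) hq hne
        exact hk (le_bot_iff.1 (hd ▸ inf_le_inf_right q (hQ2 k)))
      have hQm : Qof m = q := key hx.2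
      have hQm' : Qof m' = q := key hy.2
      have hex : ∃ k, Qof k = q := ⟨m, hQm⟩
      have hn : Qof (Nat.find hex) = q := Nat.find_spec hex
      have hmin : ∀ k < Nat.find hex, Qof k ≠ Qof (Nat.find hex) :=
        fun k hk hkeq => Nat.find_min hex hk (hkeq.trans hn)
      have hmA : m ∈ S ∩ A (Nat.find hex) := ⟨hmS, hQm.trans hn.symm, hmin⟩
      have hm'A : m' ∈ S ∩ A (Nat.find hex) := ⟨hm'S, hQm'.trans hn.symm, hmin⟩
      rw [hsub (Nat.find hex) hmA hm'A]
  · intro hpair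
    refine ⟨hU, fun p hinj hpart => ⟨trace_ultra hU hinj hpart, ?_⟩⟩
    intro A hAdisj hAcover hAnot
    set Q : Set B := (fun n => ⨆ m ∈ A n, p m) '' {n | (A n).Nonempty} with hQdef
    have hpbot : ∀ n, p n ≠ ⊥ := fun n h => hpart.1 (h ▸ Set.mem_range_self n)
    have hpd := partition_pdisj hinj hpart
    have hQpart : IsBPartition Q := by
      refine ⟨?_, ?_, ?_⟩
      · rintro ⟨n, hn, hbot⟩
        obtain ⟨m, hm⟩ := hn
        exact hpbot m (le_bot_iff.1 (hbot ▸ le_biSup _ hm))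
      · rintro _ ⟨n, hn, rfl⟩ _ ⟨n', hn', rfl⟩ hne
        have hnn : n ≠ n' := fun h => hne (by rw [h])
        rw [trace_inf hpd, hAdisj hnn]
        simp
      · intro b hb
        obtain ⟨x, hx, hbx⟩ := hpart.2.2 b hb
        obtain ⟨m, rfl⟩ := hx
        obtain ⟨n, hn⟩ := Set.mem_iUnion.1 (hAcover ▸ Set.mem_univ m : m ∈ ⋃ n, A n)
        refine ⟨⨆ k ∈ A n, p k, ⟨n, ⟨m, hn⟩, rfl⟩, fun h => hbx ?_⟩
        exact le_bot_iff.1 (h ▸ inf_le_inf_left b (le_biSup _ hn))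
    have hPQ : BRefines (Set.range p) Q := by
      rintro _ ⟨m, rfl⟩
      obtain ⟨n, hn⟩ := Set.mem_iUnion.1 (hAcover ▸ Set.mem_univ m : m ∈ ⋃ n, A n)
      exact ⟨⨆ k ∈ A n, p k, ⟨n, ⟨m, hn⟩, rfl⟩, le_biSup _ hn⟩
    rcases hpair (Set.range p) Q hpart hQpart hPQ with ⟨q, hqQ, hqU⟩ | ⟨X, hXP, hXU, hXq⟩
    · obtain ⟨n, hn, rfl⟩ := hqQ
      exact absurd hqU (hAnot n)
    · set S := {m | p m ∈ X} with hSdef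
      have hXS : X = p '' S := by
        apply Set.Subset.antisymm
        · intro x hx
          obtain ⟨m, rfl⟩ := hXP hx
          exact ⟨m, hx, rfl⟩
        · rintro _ ⟨m, hm, rfl⟩
          exact hm
      refine ⟨S, ?_, ?_⟩
      · show (⨆ m ∈ S, p m) ∈ U
        rw [← sSup_image, ← hXS]
        exact hXU
      · intro n m hm m' hm'
        have hne : (A n).Nonempty := ⟨m, hm.2⟩
        have hqQ : (⨆ k ∈ A n, p k) ∈ Q := ⟨n, hne, rfl⟩
        have hmem : ∀ {k : ℕ}, k ∈ S ∩ A n →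
            p k ∈ {x ∈ X | x ⊓ (⨆ k ∈ A n, p k) ≠ ⊥} := by
          intro k hk
          refine ⟨hk.1, ?_⟩
          rw [inf_eq_left.2 (le_biSup _ hk.2)]
          exact hpbot k
        exact hinj (hXq _ hqQ (hmem hm) (hmem hm'))
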